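/- Let μ > 1 and ξ = (N(4μ²+2μ+2))^(-1/2). Then ∑_{l=1}^{N} (4ξ²μ² + 2ξ²μ + 2ξ²)(1 + (2N−l)ξ²) lies in the interval [1, 3/2]. -/

import Mathlib

theorem stmt_9 (N : ℕ) (hN : 0 < N) (μ : ℝ) (hμ : 1 < μ) (ξ : ℝ)
    (hξ : ξ = ((N : ℝ) * (4 * μ ^ 2 + 2 * μ + 2)) ^ (-(1/2) : ℝ)) :
    ∑ l ∈ Finset.Icc 1 N,
      (4 * ξ ^ 2 * μ ^ 2 + 2 * ξ ^ 2 * μ + 2 * ξ ^ 2) * (1 + ((2 * N : ℝ) - l) * ξ ^ 2)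
      ∈ Set.Icc (1 : ℝ) (3 / 2) := by
  set c : ℝ := 4 * μ ^ 2 + 2 * μ + 2 with hc
  set t : ℝ := (N : ℝ) with ht
  have ht1 : (1 : ℝ) ≤ t := by rw [ht]; exact_mod_cast hN
  have hcpos : (0 : ℝ) < c := by nlinarith
  have hc8 : (8 : ℝ) ≤ c := by nlinarith
  have htc : (0 : ℝ) < t * c := by positivity
  have hx : ξ ^ 2 = (t * c)⁻¹ := by
    rw [hξ, sq, ← Real.rpow_add htc]
    norm_num [Real.rpow_neg_one]
  set x : ℝ := ξ ^ 2 with hxdef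
  have hxpos : 0 < x := by rw [hx]; positivity
  -- gauss sum
  have hgauss : ∑ l ∈ Finset.Icc 1 N, (l : ℝ) = t * (t + 1) / 2 := by
    have h2 := Finset.sum_range_id_mul_two (N + 1)
    have h3 : ∑ l ∈ Finset.Icc 1 N, l = ∑ l ∈ Finset.range (N + 1), l := by
      rw [Finset.range_eq_Ico]
      rw [← Finset.Ico_add_one_right_eq_Icc]
      rw [Finset.sum_Ico_eq_sum_range, Finset.sum_Ico_eq_sum_range]
      simp [Finset.sum_range_succ', add_comm]
    have h2n : (∑ l ∈ Finset.Icc 1 N, l) * 2 = N * (N + 1) := by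
      rw [h3]; simpa [Nat.mul_comm] using h2
    have h4 : ((∑ l ∈ Finset.Icc 1 N, l : ℕ) : ℝ) * 2 = t * (t + 1) := by
      rw [ht]; exact_mod_cast h2n
    push_cast at h4 ⊢
    linarith
  have hsum : ∑ l ∈ Finset.Icc 1 N,
      (4 * x * μ ^ 2 + 2 * x * μ + 2 * x) * (1 + ((2 * N : ℝ) - l) * x)
      = 1 + (3 * t - 1) / (2 * (t * c)) := by
    have : ∀ l ∈ Finset.Icc 1 N,
        (4 * x * μ ^ 2 + 2 * x * μ + 2 * x) * (1 + ((2 * N : ℝ) - l) * x)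
        = (x * c * (1 + 2 * t * x)) - (x * c * x) * (l : ℝ) := by
      intro l _
      rw [hc, ht]; ring
    rw [Finset.sum_congr rfl this, Finset.sum_sub_distrib, Finset.sum_const,
      ← Finset.mul_sum, hgauss, Nat.card_Icc]
    simp only [Nat.add_sub_cancel]
    rw [hx]
    have htne : t ≠ 0 := by linarith
    have hcne : c ≠ 0 := ne_of_gt hcpos
    push_cast
    rw [nsmul_eq_mul, ← ht]
    field_simp
    ring
  rw [show (4 * ξ ^ 2 * μ ^ 2 + 2 * ξ ^ 2 * μ + 2 * ξ ^ 2) = (4 * x * μ ^ 2 + 2 * x * μ + 2 * x) from by rw [hxdef]] at *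
  rw [hsum]
  constructor
  · have h1 : 0 < 3 * t - 1 := by linarith
    have h2 : 0 < 2 * (t * c) := by linarith
    have : 0 ≤ (3 * t - 1) / (2 * (t * c)) := le_of_lt (div_pos h1 h2)
    linarith
  · have h1 : (3 * t - 1) / (2 * (t * c)) ≤ 1 / 2 := by
      rw [div_le_div_iff₀ (by positivity) (by norm_num)]
      nlinarith
    linarith
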